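/- Let y, u₁, u₂ ∈ ℝ^m with u₁, u₂ linearly independent and y not simultaneously orthogonal to both u₁ and u₂. Let u(t) = u₁ cos t + u₂ sin t and f(t) = ‖y − (yᵀu(t)/‖u(t)‖²) u(t)‖². Then f has a unique minimizer and a unique maximizer on [0, π). -/

import Mathlib

open Real
open scoped RealInnerProductSpace

/-- A PSD binary quadratic form vanishing at two independent points is zero. -/
lemma form_zero (al be ga c1 s1 c2 s2 : ℝ) (hd : c1*s2 - s1*c2 ≠ 0)
    (hpos : ∀ c s : ℝ, 0 ≤ al*c^2 + 2*be*c*s + ga*s^2)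
    (h1 : al*c1^2 + 2*be*c1*s1 + ga*s1^2 = 0)
    (h2 : al*c2^2 + 2*be*c2*s2 + ga*s2^2 = 0) :
    al = 0 ∧ be = 0 ∧ ga = 0 := by
  have h3 : al*(c1*c2) + be*(c1*s2+s1*c2) + ga*(s1*s2) = 0 := by
    have hp := hpos (c1+c2) (s1+s2)
    have hm := hpos (c1-c2) (s1-s2)
    nlinarith [hp, hm, h1, h2]
  have P1 : al*c1 + be*s1 = 0 := by
    have := mul_eq_zero.mp (show (al*c1 + be*s1) * (c1*s2 - s1*c2) = 0 by
      linear_combination s2*h1 - s1*h3)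
    tauto
  have P2 : be*c1 + ga*s1 = 0 := by
    have := mul_eq_zero.mp (show (be*c1 + ga*s1) * (c1*s2 - s1*c2) = 0 by
      linear_combination c1*h3 - c2*h1)
    tauto
  have P1' : al*c2 + be*s2 = 0 := by
    have := mul_eq_zero.mp (show (al*c2 + be*s2) * (c1*s2 - s1*c2) = 0 by
      linear_combination s2*h3 - s1*h2)
    tauto
  have P2' : be*c2 + ga*s2 = 0 := by
    have := mul_eq_zero.mp (show (be*c2 + ga*s2) * (c1*s2 - s1*c2) = 0 by
      linear_combination c1*h2 - c2*h3)
    tauto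
  refine ⟨?_, ?_, ?_⟩
  · have := mul_eq_zero.mp (show al * (c1*s2 - s1*c2) = 0 by
      linear_combination s2*P1 - s1*P1')
    tauto
  · have := mul_eq_zero.mp (show be * (c1*s2 - s1*c2) = 0 by
      linear_combination c1*P1' - c2*P1)
    tauto
  · have := mul_eq_zero.mp (show ga * (c1*s2 - s1*c2) = 0 by
      linear_combination c1*P2' - c2*P2)
    tauto

lemma key_contra (A B C a b l : ℝ) (hD : B^2 < A*C) (hab : ¬(a = 0 ∧ b = 0))
    (e1 : a^2 = l*A) (e2 : a*b = l*B) (e3 : b^2 = l*C) : False := by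
  have h0 : l^2*(A*C - B^2) = 0 := by
    linear_combination (-(l*C))*e1 - a^2*e3 + (a*b+l*B)*e2
  have hl : l = 0 := by
    have h2 : l^2 = 0 := by
      rcases mul_eq_zero.mp h0 with h | h
      · exact h
      · nlinarith
    exact pow_eq_zero_iff two_ne_zero |>.mp h2
  apply hab
  constructor
  · have : a^2 = 0 := by rw [e1, hl, zero_mul]
    exact pow_eq_zero_iff two_ne_zero |>.mp this
  · have : b^2 = 0 := by rw [e3, hl, zero_mul]
    exact pow_eq_zero_iff two_ne_zero |>.mp this

lemma resid {E : Type*} [NormedAddCommGroup E] [InnerProductSpace ℝ E] (y u : E) (hu : u ≠ 0) :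
    ‖y - (⟪y,u⟫/‖u‖^2) • u‖^2 = ‖y‖^2 - ⟪y,u⟫^2/‖u‖^2 := by
  have h : (‖u‖:ℝ)^2 ≠ 0 := pow_ne_zero 2 (norm_ne_zero_iff.mpr hu)
  rw [norm_sub_sq_real, real_inner_smul_right, norm_smul, mul_pow, Real.norm_eq_abs, sq_abs]
  field_simp
  ring

/-- The curve `u(t) = u₁ cos t + u₂ sin t`. -/
noncomputable def uCurve {m : ℕ} (u₁ u₂ : EuclideanSpace ℝ (Fin m)) (t : ℝ) :
    EuclideanSpace ℝ (Fin m) :=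
  Real.cos t • u₁ + Real.sin t • u₂

/-- Squared norm of the residual of projecting `y` onto the line spanned by `u(t)`. -/
noncomputable def atomF {m : ℕ} (y u₁ u₂ : EuclideanSpace ℝ (Fin m)) (t : ℝ) : ℝ :=
  ‖y - (⟪y, uCurve u₁ u₂ t⟫ / ‖uCurve u₁ u₂ t‖ ^ 2) • uCurve u₁ u₂ t‖ ^ 2

theorem stmt_7 (m : ℕ) (y u₁ u₂ : EuclideanSpace ℝ (Fin m))
    (hind : LinearIndependent ℝ ![u₁, u₂])
    (hy : ¬(⟪y, u₁⟫ = 0 ∧ ⟪y, u₂⟫ = 0)) :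
    (∃! tmin : ℝ, tmin ∈ Set.Ico (0 : ℝ) Real.pi ∧
        ∀ t ∈ Set.Ico (0 : ℝ) Real.pi, atomF y u₁ u₂ tmin ≤ atomF y u₁ u₂ t) ∧
    (∃! tmax : ℝ, tmax ∈ Set.Ico (0 : ℝ) Real.pi ∧
        ∀ t ∈ Set.Ico (0 : ℝ) Real.pi, atomF y u₁ u₂ t ≤ atomF y u₁ u₂ tmax) := by
  set a := (⟪y, u₁⟫ : ℝ) with ha
  set b := (⟪y, u₂⟫ : ℝ) with hb
  set A := (‖u₁‖ : ℝ)^2 with hA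
  set B := (⟪u₁, u₂⟫ : ℝ) with hB
  set C := (‖u₂‖ : ℝ)^2 with hC
  have hpair := LinearIndependent.pair_iff.mp hind
  -- u(t) never vanishes
  have hune : ∀ t : ℝ, uCurve u₁ u₂ t ≠ 0 := by
    intro t h
    obtain ⟨h1, h2⟩ := hpair (Real.cos t) (Real.sin t) h
    nlinarith [Real.sin_sq_add_cos_sq t]
  have hQpos : ∀ t : ℝ, (0:ℝ) < ‖uCurve u₁ u₂ t‖^2 :=
    fun t => pow_pos (norm_pos_iff.mpr (hune t)) 2
  -- scalar formulas
  have hinner : ∀ t : ℝ, ⟪y, uCurve u₁ u₂ t⟫ = Real.cos t * a + Real.sin t * b := by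
    intro t
    simp only [uCurve]
    rw [inner_add_right, real_inner_smul_right, real_inner_smul_right, ha, hb]
  have hnorm : ∀ t : ℝ, ‖uCurve u₁ u₂ t‖^2
      = A * Real.cos t^2 + 2*B*(Real.cos t*Real.sin t) + C * Real.sin t^2 := by
    intro t
    rw [← real_inner_self_eq_norm_sq]
    simp only [uCurve]
    rw [real_inner_add_add_self]
    simp only [real_inner_smul_left, real_inner_smul_right, real_inner_self_eq_norm_sq,
      norm_smul, mul_pow, Real.norm_eq_abs, sq_abs]
    rw [hA, hB, hC]
    ring
  -- the quotient function
  set g : ℝ → ℝ := fun t => ⟪y, uCurve u₁ u₂ t⟫^2 / ‖uCurve u₁ u₂ t‖^2 with hg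
  have hfg : ∀ t : ℝ, atomF y u₁ u₂ t = ‖y‖^2 - g t := by
    intro t
    exact resid y (uCurve u₁ u₂ t) (hune t)
  have hgc : Continuous g := by
    apply Continuous.div
    · apply Continuous.pow
      exact (continuous_const.inner (by unfold uCurve; fun_prop))
    · apply Continuous.pow
      exact Continuous.norm (by unfold uCurve; fun_prop)
    · exact fun t => ne_of_gt (hQpos t)
  have hper : Function.Periodic g π := by
    intro t
    have hu : uCurve u₁ u₂ (t + π) = -uCurve u₁ u₂ t := by
      unfold uCurve
      rw [Real.cos_add_pi, Real.sin_add_pi]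
      module
    simp only [hg]
    rw [hu, inner_neg_right, norm_neg, neg_sq]
  -- extend a bound on Ico to all of ℝ
  have hext : ∀ t : ℝ, ∃ t' ∈ Set.Ico (0:ℝ) π, g t' = g t := by
    intro t
    refine ⟨toIcoMod Real.pi_pos 0 t, toIcoMod_mem_Ico' Real.pi_pos t, ?_⟩
    rw [toIcoMod]
    exact hper.sub_zsmul_eq _
  -- B^2 < A*C
  have hu1ne : u₁ ≠ 0 := by
    have := hind.ne_zero 0
    simpa using this
  have hApos : 0 < A := pow_pos (norm_pos_iff.mpr hu1ne) 2
  have hD : B^2 < A*C := by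
    have hv : B • u₁ - A • u₂ ≠ 0 := by
      intro h
      have h' : B • u₁ + (-A) • u₂ = 0 := by rw [neg_smul, ← sub_eq_add_neg]; exact h
      obtain ⟨-, h2⟩ := hpair B (-A) h'
      simp only [neg_eq_zero] at h2
      exact (ne_of_gt hApos) h2
    have hpos : 0 < ‖B • u₁ - A • u₂‖^2 := pow_pos (norm_pos_iff.mpr hv) 2
    have hexp : ‖B • u₁ - A • u₂‖^2 = B^2*A - 2*(B*A*B) + A^2*C := by
      rw [norm_sub_sq_real]
      simp only [real_inner_smul_left, real_inner_smul_right, norm_smul, mul_pow,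
        Real.norm_eq_abs, sq_abs, real_inner_self_eq_norm_sq]
      rw [hA, hB, hC]
      ring
    rw [hexp] at hpos
    nlinarith [hpos, hApos]
  -- uniqueness of extremizers
  have keymax : ∀ t₁ ∈ Set.Ico (0:ℝ) π, ∀ t₂ ∈ Set.Ico (0:ℝ) π,
      (∀ s ∈ Set.Ico (0:ℝ) π, g s ≤ g t₁) → (∀ s ∈ Set.Ico (0:ℝ) π, g s ≤ g t₂) → t₁ = t₂ := by
    intro t₁ ht₁ t₂ ht₂ hm₁ hm₂
    by_contra hne
    set l := g t₁ with hl
    have heq : g t₂ = l := le_antisymm (hm₁ t₂ ht₂) (hm₂ t₁ ht₁)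
    have hall : ∀ t : ℝ, g t ≤ l := by
      intro t
      obtain ⟨t', ht', he⟩ := hext t
      rw [← he]; exact hm₁ t' ht'
    -- pointwise form nonnegativity on the circle
    have hcirc : ∀ t : ℝ, 0 ≤ (l*A - a^2)*(Real.cos t)^2 + 2*(l*B - a*b)*(Real.cos t)*(Real.sin t)
        + (l*C - b^2)*(Real.sin t)^2 := by
      intro t
      have h1 : ⟪y, uCurve u₁ u₂ t⟫^2 ≤ l * ‖uCurve u₁ u₂ t‖^2 := by
        have := hall t
        rw [hg] at this
        exact (div_le_iff₀ (hQpos t)).mp this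
      rw [hinner, hnorm] at h1
      nlinarith [h1]
    -- extend to all of ℝ² by homogeneity
    have hpos : ∀ c s : ℝ, 0 ≤ (l*A - a^2)*c^2 + 2*(l*B - a*b)*c*s + (l*C - b^2)*s^2 := by
      intro c s
      by_cases h0 : c = 0 ∧ s = 0
      · simp [h0.1, h0.2]
      · set z : ℂ := ⟨c, s⟩ with hz
        have hzne : z ≠ 0 := by
          intro h
          apply h0
          constructor
          · exact congrArg Complex.re h
          · exact congrArg Complex.im h
        have hc : c = ‖z‖ * Real.cos z.arg := (Complex.norm_mul_cos_arg z).symm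
        have hs : s = ‖z‖ * Real.sin z.arg := (Complex.norm_mul_sin_arg z).symm
        have hk := hcirc z.arg
        calc (0:ℝ) ≤ ‖z‖^2 * ((l*A - a^2)*(Real.cos z.arg)^2
              + 2*(l*B - a*b)*(Real.cos z.arg)*(Real.sin z.arg)
              + (l*C - b^2)*(Real.sin z.arg)^2) := by positivity
          _ = (l*A - a^2)*c^2 + 2*(l*B - a*b)*c*s + (l*C - b^2)*s^2 := by rw [hc, hs]; ring
    -- equalities at the two maximizers
    have heq1 : (l*A - a^2)*(Real.cos t₁)^2 + 2*(l*B - a*b)*(Real.cos t₁)*(Real.sin t₁)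
        + (l*C - b^2)*(Real.sin t₁)^2 = 0 := by
      have h1 : ⟪y, uCurve u₁ u₂ t₁⟫^2 = l * ‖uCurve u₁ u₂ t₁‖^2 := by
        simp only [hl, hg]
        exact (div_mul_cancel₀ _ (ne_of_gt (hQpos t₁))).symm
      rw [hinner, hnorm] at h1
      linear_combination (-1 : ℝ) * h1
    have heq2 : (l*A - a^2)*(Real.cos t₂)^2 + 2*(l*B - a*b)*(Real.cos t₂)*(Real.sin t₂)
        + (l*C - b^2)*(Real.sin t₂)^2 = 0 := by
      have h1 : ⟪y, uCurve u₁ u₂ t₂⟫^2 = l * ‖uCurve u₁ u₂ t₂‖^2 := by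
        rw [← heq]
        simp only [hg]
        exact (div_mul_cancel₀ _ (ne_of_gt (hQpos t₂))).symm
      rw [hinner, hnorm] at h1
      linear_combination (-1 : ℝ) * h1
    have hd : Real.cos t₁ * Real.sin t₂ - Real.sin t₁ * Real.cos t₂ ≠ 0 := by
      have : Real.sin (t₂ - t₁) ≠ 0 := by
        rw [Ne, Real.sin_eq_zero_iff_of_lt_of_lt (by cases ht₁; cases ht₂; linarith)
          (by cases ht₁; cases ht₂; linarith)]
        intro h
        exact hne (by linarith)
      rw [Real.sin_sub] at this
      intro h
      apply this
      linarith [h]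
    obtain ⟨e1, e2, e3⟩ := form_zero _ _ _ _ _ _ _ hd hpos heq1 heq2
    exact key_contra A B C a b l hD hy (by linarith) (by linarith) (by linarith)
  have keymin : ∀ t₁ ∈ Set.Ico (0:ℝ) π, ∀ t₂ ∈ Set.Ico (0:ℝ) π,
      (∀ s ∈ Set.Ico (0:ℝ) π, g t₁ ≤ g s) → (∀ s ∈ Set.Ico (0:ℝ) π, g t₂ ≤ g s) → t₁ = t₂ := by
    intro t₁ ht₁ t₂ ht₂ hm₁ hm₂
    by_contra hne
    set l := g t₁ with hl
    have heq : g t₂ = l := le_antisymm (hm₂ t₁ ht₁) (hm₁ t₂ ht₂)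
    have hall : ∀ t : ℝ, l ≤ g t := by
      intro t
      obtain ⟨t', ht', he⟩ := hext t
      rw [← he]; exact hm₁ t' ht'
    have hcirc : ∀ t : ℝ, 0 ≤ (a^2 - l*A)*(Real.cos t)^2 + 2*(a*b - l*B)*(Real.cos t)*(Real.sin t)
        + (b^2 - l*C)*(Real.sin t)^2 := by
      intro t
      have h1 : l * ‖uCurve u₁ u₂ t‖^2 ≤ ⟪y, uCurve u₁ u₂ t⟫^2 := by
        have := hall t
        rw [hg] at this
        exact (le_div_iff₀ (hQpos t)).mp this
      rw [hinner, hnorm] at h1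
      nlinarith [h1]
    have hpos : ∀ c s : ℝ, 0 ≤ (a^2 - l*A)*c^2 + 2*(a*b - l*B)*c*s + (b^2 - l*C)*s^2 := by
      intro c s
      by_cases h0 : c = 0 ∧ s = 0
      · simp [h0.1, h0.2]
      · set z : ℂ := ⟨c, s⟩ with hz
        have hc : c = ‖z‖ * Real.cos z.arg := (Complex.norm_mul_cos_arg z).symm
        have hs : s = ‖z‖ * Real.sin z.arg := (Complex.norm_mul_sin_arg z).symm
        have hk := hcirc z.arg
        calc (0:ℝ) ≤ ‖z‖^2 * ((a^2 - l*A)*(Real.cos z.arg)^2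
              + 2*(a*b - l*B)*(Real.cos z.arg)*(Real.sin z.arg)
              + (b^2 - l*C)*(Real.sin z.arg)^2) := by positivity
          _ = (a^2 - l*A)*c^2 + 2*(a*b - l*B)*c*s + (b^2 - l*C)*s^2 := by rw [hc, hs]; ring
    have heq1 : (a^2 - l*A)*(Real.cos t₁)^2 + 2*(a*b - l*B)*(Real.cos t₁)*(Real.sin t₁)
        + (b^2 - l*C)*(Real.sin t₁)^2 = 0 := by
      have h1 : ⟪y, uCurve u₁ u₂ t₁⟫^2 = l * ‖uCurve u₁ u₂ t₁‖^2 := by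
        simp only [hl, hg]
        exact (div_mul_cancel₀ _ (ne_of_gt (hQpos t₁))).symm
      rw [hinner, hnorm] at h1
      linear_combination h1
    have heq2 : (a^2 - l*A)*(Real.cos t₂)^2 + 2*(a*b - l*B)*(Real.cos t₂)*(Real.sin t₂)
        + (b^2 - l*C)*(Real.sin t₂)^2 = 0 := by
      have h1 : ⟪y, uCurve u₁ u₂ t₂⟫^2 = l * ‖uCurve u₁ u₂ t₂‖^2 := by
        rw [← heq]
        simp only [hg]
        exact (div_mul_cancel₀ _ (ne_of_gt (hQpos t₂))).symm
      rw [hinner, hnorm] at h1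
      linear_combination h1
    have hd : Real.cos t₁ * Real.sin t₂ - Real.sin t₁ * Real.cos t₂ ≠ 0 := by
      have : Real.sin (t₂ - t₁) ≠ 0 := by
        rw [Ne, Real.sin_eq_zero_iff_of_lt_of_lt (by cases ht₁; cases ht₂; linarith)
          (by cases ht₁; cases ht₂; linarith)]
        intro h
        exact hne (by linarith)
      rw [Real.sin_sub] at this
      intro h
      apply this
      linarith [h]
    obtain ⟨e1, e2, e3⟩ := form_zero _ _ _ _ _ _ _ hd hpos heq1 heq2
    exact key_contra A B C a b l hD hy (by linarith) (by linarith) (by linarith)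
  -- existence of max of g on Ico
  have hIccne : (Set.Icc (0:ℝ) π).Nonempty := ⟨0, le_refl 0, Real.pi_pos.le⟩
  have hgmax : ∃ t₀ ∈ Set.Ico (0:ℝ) π, ∀ s ∈ Set.Ico (0:ℝ) π, g s ≤ g t₀ := by
    obtain ⟨tx, htx, hmax⟩ := isCompact_Icc.exists_isMaxOn hIccne hgc.continuousOn
    have hmax' : ∀ s ∈ Set.Icc (0:ℝ) π, g s ≤ g tx := hmax
    by_cases h : tx = π
    · refine ⟨0, ⟨le_refl 0, Real.pi_pos⟩, fun s hs => ?_⟩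
      have h0 : g π = g 0 := by have := hper 0; simpa using this
      have := hmax' s (Set.Ico_subset_Icc_self hs)
      rw [h, h0] at this
      exact this
    · exact ⟨tx, ⟨htx.1, lt_of_le_of_ne htx.2 h⟩,
        fun s hs => hmax' s (Set.Ico_subset_Icc_self hs)⟩
  have hgmin : ∃ t₀ ∈ Set.Ico (0:ℝ) π, ∀ s ∈ Set.Ico (0:ℝ) π, g t₀ ≤ g s := by
    obtain ⟨tx, htx, hmin⟩ := isCompact_Icc.exists_isMinOn hIccne hgc.continuousOn
    have hmin' : ∀ s ∈ Set.Icc (0:ℝ) π, g tx ≤ g s := hmin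
    by_cases h : tx = π
    · refine ⟨0, ⟨le_refl 0, Real.pi_pos⟩, fun s hs => ?_⟩
      have h0 : g π = g 0 := by have := hper 0; simpa using this
      have := hmin' s (Set.Ico_subset_Icc_self hs)
      rw [h, h0] at this
      exact this
    · exact ⟨tx, ⟨htx.1, lt_of_le_of_ne htx.2 h⟩,
        fun s hs => hmin' s (Set.Ico_subset_Icc_self hs)⟩
  constructor
  · -- minimizer of atomF = maximizer of g
    obtain ⟨t₀, ht₀, hmax⟩ := hgmax
    refine ⟨t₀, ⟨ht₀, fun t ht => ?_⟩, fun t' ⟨ht', hm'⟩ => ?_⟩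
    · rw [hfg, hfg]
      have := hmax t ht
      linarith
    · refine keymax t' ht' t₀ ht₀ (fun s hs => ?_) hmax
      have := hm' s hs
      rw [hfg, hfg] at this
      linarith
  · obtain ⟨t₀, ht₀, hmin⟩ := hgmin
    refine ⟨t₀, ⟨ht₀, fun t ht => ?_⟩, fun t' ⟨ht', hm'⟩ => ?_⟩
    · rw [hfg, hfg]
      have := hmin t ht
      linarith
    · refine keymin t' ht' t₀ ht₀ (fun s hs => ?_) hmin
      have := hm' s hs
      rw [hfg, hfg] at this
      linarith
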